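/- Suppose α, β, γ are nonzero rational numbers such that none of α, β, γ is the square of a rational number and the product α·β·γ is also not the square of a rational number. Then there exists a prime p, dividing none of the numerators and denominators of α, β, γ, such that none of α, β, γ is a square modulo p. -/

import Mathlib

open scoped NumberTheorySymbols
open Finset

lemma crt3 {m1 m2 m3 : ℕ} (h12 : Nat.Coprime m1 m2) (h13 : Nat.Coprime m1 m3)
    (h23 : Nat.Coprime m2 m3) (r1 r2 r3 : ℕ) :
    ∃ b : ℕ, b ≡ r1 [MOD m1] ∧ b ≡ r2 [MOD m2] ∧ b ≡ r3 [MOD m3] := by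
  obtain ⟨k, hk1, hk2⟩ := Nat.chineseRemainder h12 r1 r2
  obtain ⟨b, hb1, hb2⟩ := Nat.chineseRemainder (h13.mul h23) k r3
  exact ⟨b, (Nat.ModEq.of_dvd (dvd_mul_right _ _) hb1).trans hk1,
    (Nat.ModEq.of_dvd (dvd_mul_left _ _) hb1).trans hk2, hb2⟩

lemma coprime_of_modeq_one {b w : ℕ} (h : b ≡ 1 [MOD w]) : Nat.Coprime b w := by
  have := h.gcd_eq
  simpa [Nat.Coprime] using this

lemma odd_of_modeq {b r : ℕ} (hr : Odd r) (h : b ≡ r [MOD 8]) : Odd b := by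
  have h2 : b ≡ r [MOD 2] := Nat.ModEq.of_dvd (show (2:ℕ) ∣ 8 by norm_num) h
  have h3 : b % 2 = r % 2 := h2
  rw [Nat.odd_iff] at hr ⊢
  omega

lemma jacobi_core (a : ℤ) (ha : a ≠ 0) (hns : ¬ IsSquare a) (m : ℕ) (hm : m ≠ 0) :
    ∃ b : ℕ, Odd b ∧ Nat.Coprime b m ∧ J(a | b) = -1 := by
  obtain ⟨s₀, t₀, hst, hsf⟩ := Nat.sq_mul_squarefree a.natAbs
  have haN : a.natAbs ≠ 0 := Int.natAbs_ne_zero.mpr ha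
  have hs₀0 : s₀ ≠ 0 := by rintro rfl; simp at hst; omega
  have ht₀0 : t₀ ≠ 0 := by rintro rfl; simp at hst; omega
  have ha' : a = (t₀ : ℤ) ^ 2 * (a.sign * s₀) := by
    have h1 := Int.sign_mul_natAbs a
    rw [← hst] at h1
    push_cast at h1
    conv_lhs => rw [← h1]
    ring
  have hsgn : a.sign = 1 ∨ a.sign = -1 := by
    rcases lt_trichotomy a 0 with h | h | h
    · exact Or.inr (Int.sign_eq_neg_one_iff_neg.mpr h)
    · exact absurd h ha
    · exact Or.inl (Int.sign_eq_one_iff_pos.mpr h)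
  set n : ℕ := a.natAbs * m with hn
  have hn0 : n ≠ 0 := Nat.mul_ne_zero haN hm
  set u : ℕ := ordCompl[2] s₀ with hu
  set δ : ℕ := s₀.factorization 2 with hδ
  have hs₀ : 2 ^ δ * u = s₀ := Nat.ordProj_mul_ordCompl_eq_self s₀ 2
  have hu0 : u ≠ 0 := (Nat.ordCompl_pos 2 hs₀0).ne'
  have huodd : Odd u := by
    have h2 := Nat.not_dvd_ordCompl Nat.prime_two hs₀0
    rw [Nat.odd_iff]; omega
  have hudvd : u ∣ s₀ := Nat.ordCompl_dvd s₀ 2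
  have hs₀dvdn : s₀ ∣ n := by
    exact Dvd.dvd.mul_right (hst ▸ Dvd.dvd.mul_left dvd_rfl (t₀ ^ 2)) m
  have ht₀dvdn : t₀ ∣ n := by
    refine Dvd.dvd.mul_right ?_ m
    rw [← hst]
    exact Dvd.dvd.mul_right (dvd_pow_self t₀ two_ne_zero) s₀
  
  -- χ value helpers
  by_cases huone : u = 1
  · -- Case B : `s₀` is a power of 2, so `s₀ ∈ {1, 2}` and `a.sign*s₀ ∈ {-1, 2, -2}`
    have hδ1 : δ ≤ 1 := hsf.natFactorization_le_one 2
    set n₂ : ℕ := ordCompl[2] n with hn₂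
    set α : ℕ := n.factorization 2 with hα
    have hsplit : 2 ^ α * n₂ = n := Nat.ordProj_mul_ordCompl_eq_self n 2
    have hn₂0 : n₂ ≠ 0 := (Nat.ordCompl_pos 2 hn0).ne'
    have hn₂odd : Odd n₂ := by
      have h2 := Nat.not_dvd_ordCompl Nat.prime_two hn0
      rw [Nat.odd_iff]; omega
    have c8n₂ : Nat.Coprime 8 n₂ := by
      have : (8:ℕ) = 2 ^ 3 := by norm_num
      rw [this]
      exact Nat.Coprime.pow_left _ (hn₂odd.coprime_two_right.symm)
    -- the residue mod 8 we want
    set r : ℕ := if a.sign = 1 then 5 else if s₀ = 1 then 3 else 5 with hr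
    obtain ⟨b, hb8, hbn₂⟩ := Nat.chineseRemainder c8n₂ r 1
    have hbn₂' : b ≡ 1 [MOD n₂] := hbn₂
    have hrodd : Odd r := by
      rw [hr]; split_ifs <;> decide
    have hbodd : Odd b := odd_of_modeq hrodd hb8
    have hb8' : b % 8 = r % 8 := hb8
    have hr8 : r % 8 = r := by rw [hr]; split_ifs <;> rfl
    have cb8 : Nat.Coprime b 2 := hbodd.coprime_two_right
    have cb8' : Nat.Coprime b 8 := by
      have : (8:ℕ) = 2 ^ 3 := by norm_num
      rw [this]; exact cb8.pow_right _
    have cbn₂ : Nat.Coprime b n₂ := coprime_of_modeq_one hbn₂'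
    have hndvd : n ∣ (8 * n₂) ^ (α + 1) := by
      calc n = 2 ^ α * n₂ := hsplit.symm
        _ ∣ (8 * n₂) ^ α * (8 * n₂) ^ 1 := by
            refine mul_dvd_mul (pow_dvd_pow_of_dvd ⟨4 * n₂, by ring⟩ α) ?_
            rw [pow_one]; exact Dvd.dvd.mul_left dvd_rfl 8
        _ = (8 * n₂) ^ (α + 1) := by rw [← pow_add]
    have cbn : Nat.Coprime b n := ((cb8'.mul_right cbn₂).pow_right _).coprime_dvd_right hndvd
    have cbm : Nat.Coprime b m := cbn.coprime_dvd_right (Dvd.dvd.mul_left dvd_rfl a.natAbs)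
    have cbt₀ : Nat.Coprime b t₀ := cbn.coprime_dvd_right ht₀dvdn
    have hJt : J((t₀ : ℤ) ^ 2 | b) = 1 := by
      apply jacobiSym.sq_one'
      rw [Int.gcd_natCast_natCast]
      exact cbt₀.symm
    refine ⟨b, hbodd, cbm, ?_⟩
    rw [ha', jacobiSym.mul_left, hJt, one_mul]
    -- now s₀ = 1 or s₀ = 2
    have hs₀12 : s₀ = 1 ∨ s₀ = 2 := by
      rw [← hs₀, huone, mul_one]
      interval_cases δ
      · left; rfl
      · right; rfl
    rcases hsgn with hsgn | hsgn
    · -- a > 0 : then s₀ = 2 (else a is a square), r = 5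
      have hs₀2 : s₀ = 2 := by
        rcases hs₀12 with h1 | h2
        · exfalso; apply hns
          exact ⟨t₀, by rw [ha', hsgn, h1]; push_cast; ring⟩
        · exact h2
      have hrr : r = 5 := by rw [hr, if_pos hsgn]
      rw [hsgn, hs₀2, one_mul]
      push_cast
      rw [jacobiSym.at_two hbodd, ZMod.χ₈_nat_mod_eight, hb8', hr8, hrr]
      decide
    · -- a < 0
      rw [hsgn]
      rcases hs₀12 with hs₀1 | hs₀2
      · have hrr : r = 3 := by
          rw [hr, if_neg (by rw [hsgn]; decide), if_pos hs₀1]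
        rw [hs₀1]
        have h1 : ((-1 : ℤ) * ((1:ℕ):ℤ)) = -1 := by norm_num
        rw [h1, jacobiSym.at_neg_one hbodd, ZMod.χ₄_nat_mod_four]
        have hb4 : b % 4 = 3 := by omega
        rw [hb4]
        decide
      · have hrr : r = 5 := by
          rw [hr, if_neg (by rw [hsgn]; decide), if_neg (by rw [hs₀2]; decide)]
        rw [hs₀2]
        have : ((-1 : ℤ) * (2:ℕ)) = -2 := by norm_num
        rw [this, jacobiSym.at_neg_two hbodd, ZMod.χ₈'_nat_eq_if_mod_eight]
        simp [Nat.odd_iff.mp hbodd, hb8', hr8, hrr]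
  · -- Case A : `u` has an odd prime factor `q`
    set q : ℕ := u.minFac with hq
    have hqprime : q.Prime := Nat.minFac_prime huone
    haveI : Fact q.Prime := ⟨hqprime⟩
    have hqdvdu : q ∣ u := Nat.minFac_dvd u
    have hq2 : q ≠ 2 := by
      intro h
      have h2 : 2 ∣ u := h ▸ hqdvdu
      rw [Nat.odd_iff] at huodd
      omega
    have hqodd : Odd q := hqprime.odd_of_ne_two hq2
    set v : ℕ := u / q with hv
    have huv : q * v = u := Nat.mul_div_cancel' hqdvdu
    have hsfu : Squarefree u := hsf.squarefree_of_dvd hudvd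
    have hqv : ¬ q ∣ v := by
      intro hd
      exact hqprime.not_isUnit (hsfu q (huv ▸ mul_dvd_mul_left q hd))
    have hvodd : Odd v := by
      rw [Nat.odd_iff] at huodd ⊢
      by_contra h
      have h2 : 2 ∣ v := by omega
      have h3 : 2 ∣ u := huv ▸ h2.mul_left q
      omega
    have hv0 : v ≠ 0 := by
      intro h
      apply hu0
      rw [← huv, h, mul_zero]
    -- the avoided moduli
    set n₂ : ℕ := ordCompl[2] n with hn₂
    set α : ℕ := n.factorization 2 with hα
    have hsplit : 2 ^ α * n₂ = n := Nat.ordProj_mul_ordCompl_eq_self n 2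
    have hn₂0 : n₂ ≠ 0 := (Nat.ordCompl_pos 2 hn0).ne'
    set W : ℕ := ordCompl[q] n₂ with hW
    set β : ℕ := n₂.factorization q with hβ
    have hsplit2 : q ^ β * W = n₂ := Nat.ordProj_mul_ordCompl_eq_self n₂ q
    have hW0 : W ≠ 0 := (Nat.ordCompl_pos q hn₂0).ne'
    have hn₂odd : Odd n₂ := by
      have h2 := Nat.not_dvd_ordCompl Nat.prime_two hn0
      rw [Nat.odd_iff]; omega
    have hWdvdn₂ : W ∣ n₂ := Nat.ordCompl_dvd n₂ q
    have hWodd : Odd W := by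
      rcases Nat.even_or_odd W with he | ho
      · exfalso
        rw [Nat.odd_iff] at hn₂odd
        rw [Nat.even_iff] at he
        have h2 : 2 ∣ W := by omega
        have := h2.trans hWdvdn₂
        omega
      · exact ho
    have hqW : ¬ q ∣ W := Nat.not_dvd_ordCompl hqprime hn₂0
    -- a nonresidue mod q
    obtain ⟨c', hc'⟩ := FiniteField.exists_nonsquare (F := ZMod q)
      (by rw [ZMod.ringChar_zmod_n]; exact hq2)
    set c : ℕ := c'.val with hc
    have hcc : ((c : ℕ) : ZMod q) = c' := ZMod.natCast_rightInverse c'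
    have hcJ : J((c : ℤ) | q) = -1 := by
      rw [ZMod.nonsquare_iff_jacobiSym_eq_neg_one]
      intro hsq
      apply hc'
      rwa [show (((c:ℤ)) : ZMod q) = c' by rw [Int.cast_natCast]; exact hcc] at hsq
    have hc0 : ¬ q ∣ c := by
      intro hd
      apply hc'
      have : ((c : ℕ) : ZMod q) = 0 := (ZMod.natCast_eq_zero_iff c q).mpr hd
      rw [hcc] at this
      rw [this]
      exact ⟨0, by ring⟩
    -- coprimality of the three moduli 8, q, W
    have c8q : Nat.Coprime 8 q := by
      have : (8:ℕ) = 2 ^ 3 := by norm_num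
      rw [this]; exact Nat.Coprime.pow_left _ (hqodd.coprime_two_right.symm)
    have c8W : Nat.Coprime 8 W := by
      have : (8:ℕ) = 2 ^ 3 := by norm_num
      rw [this]; exact Nat.Coprime.pow_left _ (hWodd.coprime_two_right.symm)
    have cqW : Nat.Coprime q W := hqprime.coprime_iff_not_dvd.mpr hqW
    obtain ⟨b, hb8, hbq, hbW⟩ := crt3 c8q c8W cqW 1 c 1
    have hbodd : Odd b := odd_of_modeq (by decide) hb8
    have hb8' : b % 8 = 1 := by
      have : b % 8 = 1 % 8 := hb8
      omega
    have hb4 : b % 4 = 1 := by omega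
    have cb8' : Nat.Coprime b 8 := by
      have : (8:ℕ) = 2 ^ 3 := by norm_num
      rw [this]; exact hbodd.coprime_two_right.pow_right _
    have cbq : Nat.Coprime b q := by
      refine (Nat.coprime_comm.mp (hqprime.coprime_iff_not_dvd.mpr ?_))
      intro hd
      apply hc0
      have h1 : b % q = c % q := hbq
      have h2 : b % q = 0 := by
        obtain ⟨k, rfl⟩ := hd
        exact Nat.mul_mod_right q k
      exact Nat.dvd_of_mod_eq_zero (by omega)
    have cbW : Nat.Coprime b W := coprime_of_modeq_one hbW
    have hndvd : n ∣ (8 * q * W) ^ (α + β + 1) := by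
      calc n = 2 ^ α * (q ^ β * W) := by rw [hsplit2, hsplit]
        _ ∣ (8*q*W) ^ α * ((8*q*W) ^ β * (8*q*W) ^ 1) := by
            refine mul_dvd_mul (pow_dvd_pow_of_dvd ⟨4 * q * W, by ring⟩ α)
              (mul_dvd_mul (pow_dvd_pow_of_dvd ⟨8 * W, by ring⟩ β) ?_)
            rw [pow_one]; exact Dvd.dvd.mul_left dvd_rfl _
        _ = (8*q*W) ^ (α + β + 1) := by rw [← pow_add, ← pow_add, Nat.add_assoc]
    have cbn : Nat.Coprime b n :=
      (((cb8'.mul_right cbq).mul_right cbW).pow_right _).coprime_dvd_right hndvd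
    have cbm : Nat.Coprime b m := cbn.coprime_dvd_right (Dvd.dvd.mul_left dvd_rfl a.natAbs)
    have cbt₀ : Nat.Coprime b t₀ := cbn.coprime_dvd_right ht₀dvdn
    refine ⟨b, hbodd, cbm, ?_⟩
    have hJt : J((t₀ : ℤ) ^ 2 | b) = 1 := by
      apply jacobiSym.sq_one'
      rw [Int.gcd_natCast_natCast]
      exact cbt₀.symm
    have hJsign : J(a.sign | b) = 1 := by
      rcases hsgn with h | h
      · rw [h]; exact jacobiSym.one_left b
      · rw [h, jacobiSym.at_neg_one hbodd, ZMod.χ₄_nat_mod_four, hb4]; decide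
    have hJ2 : J((2:ℤ) | b) = 1 := by
      rw [jacobiSym.at_two hbodd, ZMod.χ₈_nat_mod_eight, hb8']; decide
    have hJq : J((q:ℤ) | b) = -1 := by
      rw [jacobiSym.quadratic_reciprocity_one_mod_four' hqodd hb4]
      have : ((b : ℤ)) % q = ((c : ℤ)) % q := by exact_mod_cast hbq
      rw [jacobiSym.mod_left' this]
      exact hcJ
    have hvW : v ∣ W := by
      have hvu : v ∣ u := huv ▸ Dvd.dvd.mul_left dvd_rfl q
      have hvn : v ∣ n := (hvu.trans hudvd).trans hs₀dvdn
      have h2v : ¬ 2 ∣ v := by rw [Nat.odd_iff] at hvodd; omega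
      have hvn₂ : v ∣ n₂ := Nat.dvd_ordCompl_of_dvd_not_dvd hvn h2v
      exact Nat.dvd_ordCompl_of_dvd_not_dvd hvn₂ hqv
    have hJv : J((v:ℤ) | b) = 1 := by
      rw [jacobiSym.quadratic_reciprocity_one_mod_four' hvodd hb4]
      have hbv : b ≡ 1 [MOD v] := Nat.ModEq.of_dvd hvW hbW
      have : ((b : ℤ)) % v = ((1 : ℕ) : ℤ) % v := by exact_mod_cast hbv
      rw [jacobiSym.mod_left' this]
      exact jacobiSym.one_left v
    -- assemble
    rw [ha', jacobiSym.mul_left, hJt, one_mul, jacobiSym.mul_left, hJsign, one_mul]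
    rw [← hs₀, ← huv]
    push_cast
    rw [jacobiSym.mul_left, jacobiSym.pow_left, hJ2, one_pow, one_mul,
      jacobiSym.mul_left, hJq, hJv, mul_one]

noncomputable def sgn2 (s : ℤ) : ZMod 2 := if s = 1 then 0 else 1

lemma sgn2_mul {x y : ℤ} (hx : x = 1 ∨ x = -1) (hy : y = 1 ∨ y = -1) :
    sgn2 (x * y) = sgn2 x + sgn2 y := by
  rcases hx with rfl | rfl <;> rcases hy with rfl | rfl <;> simp [sgn2] <;> decide

lemma sgn2_prod {ι : Type*} (T : Finset ι) (g : ι → ℤ) (h : ∀ i ∈ T, g i = 1 ∨ g i = -1) :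
    sgn2 (∏ i ∈ T, g i) = ∑ i ∈ T, sgn2 (g i) := by
  classical
  induction T using Finset.induction_on with
  | empty => simp [sgn2]
  | @insert a s ha ih =>
    have hps : (∏ i ∈ s, g i) = 1 ∨ (∏ i ∈ s, g i) = -1 :=
      Finset.prod_induction g (fun z => z = 1 ∨ z = -1)
        (fun x y hx hy => by rcases hx with rfl|rfl <;> rcases hy with rfl|rfl <;> norm_num)
        (Or.inl rfl) (fun i hi => h i (mem_insert_of_mem hi))
    rw [Finset.prod_insert ha, Finset.sum_insert ha,
      sgn2_mul (h a (mem_insert_self a s)) hps, ih (fun i hi => h i (mem_insert_of_mem hi))]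

lemma jacobi_finset_prod_left {ι : Type*} (T : Finset ι) (g : ι → ℤ) (b : ℕ) :
    J(∏ i ∈ T, g i | b) = ∏ i ∈ T, J(g i | b) := by
  classical
  induction T using Finset.induction_on with
  | empty => simp [jacobiSym.one_left]
  | @insert a s ha ih =>
    rw [Finset.prod_insert ha, Finset.prod_insert ha, jacobiSym.mul_left, ih]

lemma key (a : Fin 3 → ℤ) (h0 : ∀ i, a i ≠ 0)
    (hT : ∀ T : Finset (Fin 3), Odd T.card → ¬ IsSquare (∏ i ∈ T, a i)) :
    ∃ p : ℕ, p.Prime ∧ Odd p ∧ (∀ i, ¬ (p:ℤ) ∣ a i) ∧ (∀ i, ¬ IsSquare ((a i : ZMod p))) := by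
  classical
  set K : ℕ := (a 0).natAbs * ((a 1).natAbs * (a 2).natAbs) with hK
  set M : ℕ := 4 * K with hM
  have hKa : ∀ i, (a i).natAbs ∣ K := by
    have e0 : (a 0).natAbs ∣ K := ⟨(a 1).natAbs * (a 2).natAbs, by rw [hK]⟩
    have e1 : (a 1).natAbs ∣ K := ⟨(a 0).natAbs * (a 2).natAbs, by rw [hK]; ring⟩
    have e2 : (a 2).natAbs ∣ K := ⟨(a 0).natAbs * (a 1).natAbs, by rw [hK]; ring⟩
    intro i
    fin_cases i
    · exact e0
    · exact e1
    · exact e2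
  have hMa : ∀ i, (a i).natAbs ∣ M := fun i => (hKa i).mul_left 4
  have hM0 : M ≠ 0 := by
    have h1 := Int.natAbs_ne_zero.mpr (h0 0)
    have h2 := Int.natAbs_ne_zero.mpr (h0 1)
    have h3 := Int.natAbs_ne_zero.mpr (h0 2)
    positivity
  -- b coprime to M gives unit Jacobi symbols
  have hpm : ∀ (i : Fin 3) (b : ℕ), Nat.Coprime b M → J(a i | b) = 1 ∨ J(a i | b) = -1 := by
    intro i b hb
    apply jacobiSym.eq_one_or_neg_one
    have : Nat.Coprime (a i).natAbs b := Nat.Coprime.coprime_dvd_left (hMa i) hb.symm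
    simpa [Int.gcd] using this
  -- the set of achievable sign vectors
  set G : Set (Fin 3 → ZMod 2) :=
    { w | ∃ b : ℕ, Odd b ∧ Nat.Coprime b M ∧ ∀ i, w i = sgn2 (J(a i | b)) } with hG
  -- target vector is in the span
  have htarget : (fun _ => (1 : ZMod 2)) ∈ Submodule.span (ZMod 2) G := by
    by_contra hnm
    obtain ⟨φ, hφx, hφmap⟩ := Submodule.exists_dual_map_eq_bot_of_notMem hnm inferInstance
    set T : Finset (Fin 3) := Finset.univ.filter (fun i => φ (fun j => if i = j then 1 else 0) ≠ 0)
      with hTdef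
    have hφeval : ∀ w : Fin 3 → ZMod 2, φ w = ∑ i ∈ T, w i := by
      intro w
      conv_lhs => rw [pi_eq_sum_univ w]
      rw [map_sum]
      rw [← Finset.sum_filter_add_sum_filter_not Finset.univ
        (fun i => φ (fun j => if i = j then 1 else 0) ≠ 0)]
      have hz : ∀ i ∈ Finset.univ.filter
          (fun i => ¬ φ (fun j => if i = j then 1 else 0) ≠ 0),
          φ (w i • fun j => if i = j then 1 else 0) = 0 := by
        intro i hi
        simp only [Finset.mem_filter, not_not] at hi
        rw [map_smul, hi.2, smul_zero]
      rw [Finset.sum_congr rfl hz, Finset.sum_const, smul_zero, add_zero]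
      apply Finset.sum_congr rfl
      intro i hi
      simp only [hTdef, Finset.mem_filter] at hi
      have h1 : φ (fun j => if i = j then 1 else 0) = 1 := by
        rcases (by decide : ∀ c : ZMod 2, c = 0 ∨ c = 1) (φ (fun j => if i = j then 1 else 0)) with h | h
        · exact absurd h hi.2
        · exact h
      rw [map_smul, h1, smul_eq_mul, mul_one]
    have hTodd : Odd T.card := by
      have h1 : φ (fun _ => (1 : ZMod 2)) ≠ 0 := hφx
      rw [hφeval] at h1
      simp only [Finset.sum_const, nsmul_eq_mul, mul_one] at h1
      rcases Nat.even_or_odd T.card with he | ho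
      · exfalso; apply h1
        exact (ZMod.natCast_eq_zero_iff T.card 2).mpr he.two_dvd
      · exact ho
    obtain ⟨b, hbodd, hbcop, hbJ⟩ :=
      jacobi_core (∏ i ∈ T, a i) (Finset.prod_ne_zero_iff.mpr fun i _ => h0 i) (hT T hTodd) M hM0
    have hwG : (fun i => sgn2 (J(a i | b))) ∈ G := ⟨b, hbodd, hbcop, fun i => rfl⟩
    have hφw : φ (fun i => sgn2 (J(a i | b))) = 0 := by
      have : φ (fun i => sgn2 (J(a i | b))) ∈ Submodule.map φ (Submodule.span (ZMod 2) G) :=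
        Submodule.mem_map_of_mem (Submodule.subset_span hwG)
      rw [hφmap] at this
      exact (Submodule.mem_bot _).mp this
    rw [hφeval] at hφw
    have hprod : ∑ i ∈ T, sgn2 (J(a i | b)) = 1 := by
      rw [← sgn2_prod T _ (fun i _ => hpm i b hbcop), ← jacobi_finset_prod_left, hbJ]
      decide
    rw [hprod] at hφw
    exact one_ne_zero hφw
  -- pull back along span: the target vector is achievable
  have hP : ∃ b : ℕ, Odd b ∧ Nat.Coprime b M ∧ ∀ i, sgn2 (J(a i | b)) = 1 := by
    have := Submodule.span_induction (p := fun w _ =>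
        ∃ b : ℕ, Odd b ∧ Nat.Coprime b M ∧ ∀ i, sgn2 (J(a i | b)) = w i)
      (fun x hx => by obtain ⟨b, h1, h2, h3⟩ := hx; exact ⟨b, h1, h2, fun i => (h3 i).symm⟩)
      (⟨1, odd_one, Nat.coprime_one_left M, fun i => by simp [jacobiSym.one_right, sgn2]⟩)
      (fun x y hx hy ⟨b, hb1, hb2, hb3⟩ ⟨b', hb1', hb2', hb3'⟩ => by
        haveI : NeZero b := ⟨hb1.pos.ne'⟩
        haveI : NeZero b' := ⟨hb1'.pos.ne'⟩
        refine ⟨b * b', hb1.mul hb1', hb2.mul hb2', fun i => ?_⟩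
        rw [jacobiSym.mul_right, sgn2_mul (hpm i b hb2) (hpm i b' hb2'), hb3 i, hb3' i]
        simp)
      (fun c x hx ⟨b, hb1, hb2, hb3⟩ => by
        rcases (by decide : ∀ c : ZMod 2, c = 0 ∨ c = 1) c with rfl | rfl
        · exact ⟨1, odd_one, Nat.coprime_one_left M, fun i => by simp [jacobiSym.one_right, sgn2]⟩
        · exact ⟨b, hb1, hb2, fun i => by rw [one_smul]; exact hb3 i⟩)
      htarget
    obtain ⟨b, h1, h2, h3⟩ := this
    exact ⟨b, h1, h2, fun i => h3 i⟩
  obtain ⟨b, hbodd, hbcop, hbJ⟩ := hP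
  have hbJ' : ∀ i, J(a i | b) = -1 := by
    intro i
    rcases hpm i b hbcop with h | h
    · exfalso; have := hbJ i; rw [h] at this; simp [sgn2] at this
    · exact h
  -- Dirichlet
  haveI : NeZero M := ⟨hM0⟩
  have hbu : IsUnit ((b : ZMod M)) := (ZMod.isUnit_iff_coprime b M).mpr hbcop
  obtain ⟨p, hpgt, hpprime, hpcast⟩ := Nat.forall_exists_prime_gt_and_eq_mod hbu 2
  haveI : Fact p.Prime := ⟨hpprime⟩
  have hpmod : p ≡ b [MOD M] := (ZMod.natCast_eq_natCast_iff p b M).mp hpcast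
  have hpcop : Nat.Coprime p M := by
    have := hpmod.gcd_eq
    rw [Nat.Coprime] at hbcop ⊢
    omega
  have hpodd : Odd p := hpprime.odd_of_ne_two (by
    rintro rfl
    have h4 : (2:ℕ) ∣ M := ⟨2 * K, by rw [hM]; ring⟩
    have := (hpcop.eq_one_of_dvd h4 : (2:ℕ) = 1)
    norm_num at this)
  have hpJ : ∀ i, J(a i | p) = -1 := by
    intro i
    rw [jacobiSym.mod_right (a i) hpodd]
    have hdvd : 4 * (a i).natAbs ∣ M := mul_dvd_mul_left 4 (hKa i)
    have : p % (4 * (a i).natAbs) = b % (4 * (a i).natAbs) := hpmod.of_dvd hdvd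
    rw [this, ← jacobiSym.mod_right (a i) hbodd]
    exact hbJ' i
  refine ⟨p, hpprime, hpodd, fun i => ?_, fun i => ?_⟩
  · intro hdvd
    rw [Int.natCast_dvd] at hdvd
    have hpM : p ∣ M := hdvd.trans (hMa i)
    have := hpcop.eq_one_of_dvd hpM
    exact hpprime.one_lt.ne' this
  · exact ZMod.nonsquare_of_jacobiSym_eq_neg_one (hpJ i)

lemma rat_mul_den_sq (x : ℚ) : x * ((x.den : ℚ))^2 = ((x.num * x.den : ℤ) : ℚ) := by
  have hd : ((x.den : ℚ)) ≠ 0 := Nat.cast_ne_zero.mpr x.den_nz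
  nth_rewrite 1 [show x = (x.num : ℚ) / x.den from (Rat.num_div_den x).symm]
  push_cast
  field_simp

lemma rat_nonsquare {x : ℚ} (h : ¬ ∃ q : ℚ, q ^ 2 = x) : ¬ IsSquare (x.num * (x.den : ℤ)) := by
  rintro ⟨r, hr⟩
  apply h
  have hd : ((x.den : ℚ)) ≠ 0 := Nat.cast_ne_zero.mpr x.den_nz
  refine ⟨(r : ℚ) / (x.den : ℚ), ?_⟩
  rw [div_pow, div_eq_iff (pow_ne_zero _ hd), rat_mul_den_sq x, hr]
  push_cast
  ring

lemma no_sqrt_mod {p : ℕ} [Fact p.Prime] {x : ℚ}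
    (h : ¬ IsSquare (((x.num * x.den : ℤ)) : ZMod p)) :
    ¬ ∃ y : ℤ, (p : ℤ) ∣ (y ^ 2 * (x.den : ℤ) - x.num) := by
  rintro ⟨y, hy⟩
  apply h
  have h0 : (((y ^ 2 * (x.den : ℤ) - x.num : ℤ)) : ZMod p) = 0 :=
    (ZMod.intCast_zmod_eq_zero_iff_dvd _ p).mpr hy
  push_cast at h0
  refine ⟨(y : ZMod p) * ((x.den : ℕ) : ZMod p), ?_⟩
  push_cast
  linear_combination (-((x.den : ℕ) : ZMod p)) * h0

/-- If none of the nonzero rationals `α, β, γ` is a rational square and `α*β*γ` is not a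
rational square, then there exists a prime `p` (dividing no numerator or denominator of
`α, β, γ`) modulo which none of `α, β, γ` is a square. Here `α` is a square mod `p` iff
there is `x : ℤ` with `p ∣ x^2 * α.den - α.num`. -/
theorem stmt_7 (α β γ : ℚ) (hα : α ≠ 0) (hβ : β ≠ 0) (hγ : γ ≠ 0)
    (h1 : ¬ ∃ q : ℚ, q ^ 2 = α) (h2 : ¬ ∃ q : ℚ, q ^ 2 = β) (h3 : ¬ ∃ q : ℚ, q ^ 2 = γ)
    (h4 : ¬ ∃ q : ℚ, q ^ 2 = α * β * γ) :
    ∃ p : ℕ, p.Prime ∧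
      ¬ (p : ℤ) ∣ α.num ∧ ¬ p ∣ α.den ∧ ¬ (p : ℤ) ∣ β.num ∧ ¬ p ∣ β.den ∧
      ¬ (p : ℤ) ∣ γ.num ∧ ¬ p ∣ γ.den ∧
      (¬ ∃ x : ℤ, (p : ℤ) ∣ (x ^ 2 * (α.den : ℤ) - α.num)) ∧
      (¬ ∃ x : ℤ, (p : ℤ) ∣ (x ^ 2 * (β.den : ℤ) - β.num)) ∧
      (¬ ∃ x : ℤ, (p : ℤ) ∣ (x ^ 2 * (γ.den : ℤ) - γ.num)) := by
  classical
  set A : ℤ := α.num * α.den with hA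
  set B : ℤ := β.num * β.den with hB
  set C : ℤ := γ.num * γ.den with hC
  have hA0 : A ≠ 0 := mul_ne_zero (Rat.num_ne_zero.mpr hα) (Int.natCast_ne_zero.mpr α.den_nz)
  have hB0 : B ≠ 0 := mul_ne_zero (Rat.num_ne_zero.mpr hβ) (Int.natCast_ne_zero.mpr β.den_nz)
  have hC0 : C ≠ 0 := mul_ne_zero (Rat.num_ne_zero.mpr hγ) (Int.natCast_ne_zero.mpr γ.den_nz)
  have hAns : ¬ IsSquare A := rat_nonsquare h1
  have hBns : ¬ IsSquare B := rat_nonsquare h2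
  have hCns : ¬ IsSquare C := rat_nonsquare h3
  have hABCns : ¬ IsSquare (A * B * C) := by
    rintro ⟨r, hr⟩
    apply h4
    have hdα : ((α.den : ℚ)) ≠ 0 := Nat.cast_ne_zero.mpr α.den_nz
    have hdβ : ((β.den : ℚ)) ≠ 0 := Nat.cast_ne_zero.mpr β.den_nz
    have hdγ : ((γ.den : ℚ)) ≠ 0 := Nat.cast_ne_zero.mpr γ.den_nz
    refine ⟨(r : ℚ) / ((α.den : ℚ) * β.den * γ.den), ?_⟩
    rw [div_pow, div_eq_iff (pow_ne_zero _ (by positivity))]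
    have e1 := rat_mul_den_sq α
    have e2 := rat_mul_den_sq β
    have e3 := rat_mul_den_sq γ
    have heq : α * β * γ * ((α.den:ℚ) * β.den * γ.den)^2
        = ((A : ℚ)) * ((B : ℚ)) * ((C : ℚ)) := by
      calc α * β * γ * ((α.den:ℚ) * β.den * γ.den)^2
          = (α * (α.den:ℚ)^2) * (β * (β.den:ℚ)^2) * (γ * (γ.den:ℚ)^2) := by ring
        _ = ((A : ℚ)) * ((B : ℚ)) * ((C : ℚ)) := by rw [e1, e2, e3]
    rw [heq]
    exact_mod_cast (by rw [← hr] : ((A * B * C : ℤ)) = r * r) ▸ (by push_cast; ring :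
      ((r : ℚ))^2 = ((r * r : ℤ) : ℚ))
  set a : Fin 3 → ℤ := ![A, B, C] with ha
  have h0 : ∀ i, a i ≠ 0 := by
    intro i
    fin_cases i <;> simpa [ha] using ‹_›
  have hT : ∀ T : Finset (Fin 3), Odd T.card → ¬ IsSquare (∏ i ∈ T, a i) := by
    intro T hTodd
    have hcases : T = {0} ∨ T = {1} ∨ T = {2} ∨ T = {0, 1, 2} := by
      revert hTodd; revert T; decide
    rcases hcases with rfl | rfl | rfl | rfl
    · simpa [ha] using hAns
    · simpa [ha] using hBns
    · simpa [ha] using hCns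
    · have hprod : (∏ i ∈ ({0, 1, 2} : Finset (Fin 3)), a i) = A * B * C := by
        rw [show ({0, 1, 2} : Finset (Fin 3)) = Finset.univ from by decide,
          Fin.prod_univ_three]
        simp [ha]
      rw [hprod]; exact hABCns
  obtain ⟨p, hpprime, hpodd, hnd, hnsq⟩ := key a h0 hT
  haveI : Fact p.Prime := ⟨hpprime⟩
  have hndA : ¬ (p : ℤ) ∣ A := by simpa [ha] using hnd 0
  have hndB : ¬ (p : ℤ) ∣ B := by simpa [ha] using hnd 1
  have hndC : ¬ (p : ℤ) ∣ C := by simpa [ha] using hnd 2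
  have hsqA : ¬ IsSquare ((A : ZMod p)) := by simpa [ha] using hnsq 0
  have hsqB : ¬ IsSquare ((B : ZMod p)) := by simpa [ha] using hnsq 1
  have hsqC : ¬ IsSquare ((C : ZMod p)) := by simpa [ha] using hnsq 2
  refine ⟨p, hpprime, ?_, ?_, ?_, ?_, ?_, ?_, ?_, ?_, ?_⟩
  · exact fun h => hndA (hA ▸ h.mul_right _)
  · intro h
    exact hndA (hA ▸ Dvd.dvd.mul_left (Int.natCast_dvd_natCast.mpr h) α.num)
  · exact fun h => hndB (hB ▸ h.mul_right _)
  · intro h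
    exact hndB (hB ▸ Dvd.dvd.mul_left (Int.natCast_dvd_natCast.mpr h) β.num)
  · exact fun h => hndC (hC ▸ h.mul_right _)
  · intro h
    exact hndC (hC ▸ Dvd.dvd.mul_left (Int.natCast_dvd_natCast.mpr h) γ.num)
  · exact no_sqrt_mod (hA ▸ hsqA)
  · exact no_sqrt_mod (hB ▸ hsqB)
  · exact no_sqrt_mod (hC ▸ hsqC)
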